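/- With Φ and F as defined, for fixed y with 0 < y ≤ 1, the limit as x → ∞ of (log x − Φ(x,y)/y) equals ((1−y)/y)·log(1−y) + 1, where for y = 1 the term ((1−y)/y)·log(1−y) is interpreted as its limit 0. -/

import Mathlib

open Filter

noncomputable def F (x y : ℝ) : ℝ :=
  (Real.sqrt (x * (1 + Real.sqrt y) ^ 2 + 1) -
    Real.sqrt (x * (1 - Real.sqrt y) ^ 2 + 1)) ^ 2

noncomputable def Phi (x y : ℝ) : ℝ :=
  y * Real.log (1 + x - F x y / 4) + Real.log (1 + x * y - F x y / 4) -
    F x y / (4 * x)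

noncomputable def gg (y x : ℝ) : ℝ := Real.sqrt (x^2*(1-y)^2 + 2*x*(1+y) + 1)

lemma F_eq (y x : ℝ) (hy : 0 ≤ y) (hx : 0 ≤ x) :
    F x y = 2*x*(1+y) + 2 - 2 * gg y x := by
  rw [F]
  set s := Real.sqrt y with hsdef
  have hy2 : y = s^2 := (Real.sq_sqrt hy).symm
  have h1 : (0:ℝ) ≤ x * (1 + s) ^ 2 + 1 := by positivity
  have h2 : (0:ℝ) ≤ x * (1 - s) ^ 2 + 1 := by positivity
  have hprod : (x * (1 + s) ^ 2 + 1) * (x * (1 - s) ^ 2 + 1)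
      = x^2*(1-y)^2 + 2*x*(1+y) + 1 := by rw [hy2]; ring
  have hmul : Real.sqrt (x * (1 + s) ^ 2 + 1) * Real.sqrt (x * (1 - s) ^ 2 + 1) = gg y x := by
    rw [← Real.sqrt_mul h1, hprod, gg]
  rw [sub_sq, Real.sq_sqrt h1, Real.sq_sqrt h2, mul_assoc, hmul, hy2]
  ring

lemma gg_nonneg (y x : ℝ) : 0 ≤ gg y x := Real.sqrt_nonneg _

lemma gg_sq (y x : ℝ) (hy : 0 ≤ y) (hx : 0 ≤ x) :
    gg y x ^ 2 = x^2*(1-y)^2 + 2*x*(1+y) + 1 := by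
  rw [gg, Real.sq_sqrt (by positivity)]

lemma gg_div_tendsto (y : ℝ) (hy0 : 0 ≤ y) (hy1 : y ≤ 1) :
    Tendsto (fun x => gg y x / x) atTop (nhds (1 - y)) := by
  have h0 : Tendsto (fun x : ℝ => x⁻¹) atTop (nhds 0) := tendsto_inv_atTop_zero
  have hin : Tendsto (fun x : ℝ => (1-y)^2 + 2*(1+y)*x⁻¹ + x⁻¹*x⁻¹) atTop
      (nhds ((1-y)^2 + 2*(1+y)*0 + 0*0)) :=
    (tendsto_const_nhds.add (h0.const_mul _)).add (h0.mul h0)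
  have hin' := hin.sqrt
  have hval : Real.sqrt ((1-y)^2 + 2*(1+y)*0 + 0*0) = 1 - y := by
    rw [show (1-y)^2 + 2*(1+y)*0 + 0*0 = (1-y)^2 by ring, Real.sqrt_sq (by linarith)]
  rw [hval] at hin'
  refine hin'.congr' ?_
  filter_upwards [eventually_ge_atTop 1] with x hx
  have hx0 : (0:ℝ) < x := by linarith
  have : (1-y)^2 + 2*(1+y)*x⁻¹ + x⁻¹*x⁻¹ = (x^2*(1-y)^2 + 2*x*(1+y) + 1) / x^2 := by
    field_simp
  rw [this, gg, Real.sqrt_div (by positivity), Real.sqrt_sq hx0.le]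

lemma gg_sub_tendsto (y : ℝ) (hy0 : 0 ≤ y) (hy1 : y < 1) :
    Tendsto (fun x => gg y x - (1-y)*x) atTop (nhds ((1+y)/(1-y))) := by
  have hc : 0 < 1 - y := by linarith
  have hnum : Tendsto (fun x:ℝ => 2*(1+y) + x⁻¹) atTop (nhds (2*(1+y)+0)) :=
    tendsto_const_nhds.add tendsto_inv_atTop_zero
  have hden : Tendsto (fun x => gg y x / x + (1-y)) atTop (nhds ((1-y)+(1-y))) :=
    (gg_div_tendsto y hy0 hy1.le).add tendsto_const_nhds
  have hdiv := hnum.div hden (by intro h; nlinarith)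
  have hval : (2*(1+y)+0) / ((1-y)+(1-y)) = (1+y)/(1-y) := by
    rw [div_eq_div_iff (by linarith) hc.ne']; ring
  rw [hval] at hdiv
  refine hdiv.congr' ?_
  filter_upwards [eventually_ge_atTop 1] with x hx
  have hx0 : (0:ℝ) < x := by linarith
  have hg2 := gg_sq y x hy0 hx0.le
  have hgn : 0 ≤ gg y x / x := div_nonneg (gg_nonneg _ _) hx0.le
  have hpos : 0 < gg y x / x + (1-y) := by linarith
  simp only [Pi.div_apply]
  rw [div_eq_iff hpos.ne']
  field_simp
  linear_combination -hg2

lemma expr_eq (y x : ℝ) (hy0 : 0 < y) (hx : 1 ≤ x) :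
    Real.log x - Phi x y / y =
      (Real.log x - Real.log (((1-y)*x + 1 + gg y x)/2))
      - Real.log ((1 - (1-y)*x + gg y x)/2) / y
      + ((1+y)*x + 1 - gg y x)/(2*x*y) := by
  have hx0 : (0:ℝ) < x := by linarith
  have hF := F_eq y x hy0.le hx0.le
  rw [Phi]
  have h1 : 1 + x - F x y / 4 = ((1-y)*x + 1 + gg y x)/2 := by rw [hF]; ring
  have h2 : 1 + x*y - F x y / 4 = (1 - (1-y)*x + gg y x)/2 := by rw [hF]; ring
  have h3 : F x y / (4*x) = ((1+y)*x + 1 - gg y x)/(2*x) := by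
    rw [hF, div_eq_div_iff (by positivity) (by positivity)]; ring
  rw [h1, h2, h3]
  field_simp
  ring

theorem Phi_high_power_limit (y : ℝ) (hy0 : 0 < y) (hy1 : y ≤ 1) :
    Tendsto (fun x : ℝ => Real.log x - Phi x y / y) atTop
      (nhds ((1 - y) / y * Real.log (1 - y) + 1)) := by
  rcases hy1.lt_or_eq with hy | hy
  · -- y < 1
    have hc : 0 < 1 - y := by linarith
    have hg := gg_div_tendsto y hy0.le hy.le
    -- t1
    have hq : Tendsto (fun x : ℝ => ((1-y) + x⁻¹ + gg y x / x)/2) atTop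
        (nhds (((1-y) + 0 + (1-y))/2)) :=
      ((tendsto_const_nhds.add tendsto_inv_atTop_zero).add hg).div_const 2
    rw [show ((1-y)+0+(1-y))/2 = 1-y by ring] at hq
    have hAx : Tendsto (fun x : ℝ => (((1-y)*x + 1 + gg y x)/2)/x) atTop (nhds (1-y)) := by
      refine hq.congr' ?_
      filter_upwards [eventually_ge_atTop 1] with x hx
      have hx0 : (0:ℝ) < x := by linarith
      field_simp
    have t1 : Tendsto (fun x : ℝ => Real.log x - Real.log (((1-y)*x + 1 + gg y x)/2)) atTop
        (nhds (-Real.log (1-y))) := by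
      refine (hAx.log hc.ne').neg.congr' ?_
      filter_upwards [eventually_ge_atTop 1] with x hx
      have hx0 : (0:ℝ) < x := by linarith
      have hA : 0 < ((1-y)*x + 1 + gg y x)/2 := by
        have := gg_nonneg y x; nlinarith
      rw [Real.log_div hA.ne' hx0.ne']
      ring
    -- t2
    have hB : Tendsto (fun x : ℝ => (1 - (1-y)*x + gg y x)/2) atTop (nhds ((1-y)⁻¹)) := by
      have h := ((gg_sub_tendsto y hy0.le hy).const_add 1).div_const 2
      rw [show (1 + (1+y)/(1-y))/2 = (1-y)⁻¹ by field_simp; ring] at h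
      exact h.congr (fun x => by ring)
    have t2 : Tendsto (fun x : ℝ => Real.log ((1 - (1-y)*x + gg y x)/2) / y) atTop
        (nhds (Real.log ((1-y)⁻¹) / y)) :=
      (hB.log (by positivity)).div_const y
    -- t3
    have t3 : Tendsto (fun x : ℝ => ((1+y)*x + 1 - gg y x)/(2*x*y)) atTop (nhds 1) := by
      have h : Tendsto (fun x : ℝ => ((1+y) + x⁻¹ - gg y x / x)/(2*y)) atTop
          (nhds (((1+y) + 0 - (1-y))/(2*y))) :=
        ((tendsto_const_nhds.add tendsto_inv_atTop_zero).sub hg).div_const _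
      rw [show ((1+y)+0-(1-y))/(2*y) = 1 by field_simp; ring] at h
      refine h.congr' ?_
      filter_upwards [eventually_ge_atTop 1] with x hx
      have hx0 : (0:ℝ) < x := by linarith
      field_simp
    have hlim := (t1.sub t2).add t3
    rw [show -Real.log (1-y) - Real.log ((1-y)⁻¹)/y + 1
        = (1-y)/y * Real.log (1-y) + 1 by rw [Real.log_inv]; field_simp; ring] at hlim
    refine hlim.congr' ?_
    filter_upwards [eventually_ge_atTop 1] with x hx
    exact (expr_eq y x hy0 hx).symm
  · -- y = 1
    subst hy
    rw [show ((1:ℝ)-1)/1 * Real.log (1-1) + 1 = 1 by norm_num]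
    have hg : Tendsto (fun x => gg 1 x / x) atTop (nhds 0) := by
      have := gg_div_tendsto 1 (by norm_num) le_rfl
      simpa using this
    have hr : Tendsto (fun x : ℝ => 1 + (x⁻¹ + gg 1 x / x)/2) atTop (nhds (1 + (0+0)/2)) :=
      tendsto_const_nhds.add ((tendsto_inv_atTop_zero.add hg).div_const 2)
    rw [show (1:ℝ) + (0+0)/2 = 1 by norm_num] at hr
    have ta := (hr.log (by norm_num)).neg
    rw [Real.log_one] at ta
    have tb : Tendsto (fun x : ℝ => (2 + x⁻¹ - gg 1 x / x)/2) atTop (nhds ((2+0-0)/2)) :=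
      ((tendsto_const_nhds.add tendsto_inv_atTop_zero).sub hg).div_const 2
    rw [show ((2:ℝ)+0-0)/2 = 1 by norm_num] at tb
    have hlim := ta.add tb
    rw [show -(0:ℝ) + 1 = 1 by norm_num] at hlim
    refine hlim.congr' ?_
    filter_upwards [eventually_ge_atTop 1] with x hx
    have hx0 : (0:ℝ) < x := by linarith
    have hgn := gg_nonneg 1 x
    have hg2 := gg_sq 1 x (by norm_num) hx0.le
    rw [expr_eq 1 x one_pos hx]
    have e1 : ((1-(1:ℝ))*x+1+gg 1 x)/2 = (1+gg 1 x)/2 := by ring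
    have e2 : (1-(1-(1:ℝ))*x+gg 1 x)/2 = (1+gg 1 x)/2 := by ring
    rw [e1, e2]
    have hA : 0 < (1+gg 1 x)/2 := by linarith
    have hAsq : ((1+gg 1 x)/2)^2 = x + (1+gg 1 x)/2 := by linear_combination hg2/4
    have key : 1 + (x⁻¹ + gg 1 x/x)/2 = ((1+gg 1 x)/2)^2 / x := by
      rw [hAsq]; field_simp
    rw [key, Real.log_div (pow_ne_zero 2 hA.ne') hx0.ne', Real.log_pow]
    push_cast
    field_simp
    ring
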